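/- Let D ⊂ ℂ be a convex open set and h : D → ℂ holomorphic. If Re(h'(z)) > 0 for all z ∈ D, then h is injective on D. -/

import Mathlib

/-- Noshiro–Warschawski: if h is holomorphic on a convex open set D and
Re h'(z) > 0 on D, then h is injective on D. -/
theorem stmt_1 (D : Set ℂ) (hD : Convex ℝ D) (hopen : IsOpen D)
    (h h' : ℂ → ℂ) (hderiv : ∀ z ∈ D, HasDerivAt h (h' z) z)
    (hre : ∀ z ∈ D, 0 < (h' z).re) :
    Set.InjOn h D := by
  intro x hx y hy hxy
  by_contra hne
  set w := y - x with hw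
  have hwne : w ≠ 0 := sub_ne_zero.mpr (Ne.symm hne)
  set c : ℝ → ℂ := fun t => x + t • w with hc
  have hmem : ∀ t ∈ Set.Icc (0:ℝ) 1, c t ∈ D := by
    intro t ht
    have := hD hx hy (by linarith [ht.1, ht.2] : (0:ℝ) ≤ 1 - t) ht.1 (by ring)
    convert this using 1
    simp only [hc, hw, smul_eq_mul, Complex.real_smul]
    push_cast
    ring
  set φ : ℝ → ℝ := fun t => ((starRingEnd ℂ w) * h (c t)).re with hφ
  have hder : ∀ t ∈ Set.Icc (0:ℝ) 1,
      HasDerivAt φ (Complex.normSq w * (h' (c t)).re) t := by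
    intro t ht
    have hct : HasDerivAt c w t := by
      have h1 : HasDerivAt (fun t : ℝ => t • w) w t := by
        simpa using (hasDerivAt_id t).smul_const w
      exact h1.const_add x
    have hh : HasDerivAt (fun t => h (c t)) (w • h' (c t)) t := by
      have := ((hderiv _ (hmem t ht)).hasFDerivAt.restrictScalars ℝ).comp_hasDerivAt t hct
      exact this.congr_deriv (by simp)
    have hmul : HasDerivAt (fun t => (starRingEnd ℂ w) * h (c t))
        ((starRingEnd ℂ w) * (w • h' (c t))) t := hh.const_mul _
    have := (Complex.reCLM.hasFDerivAt).comp_hasDerivAt t hmul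
    refine this.congr_deriv (Eq.symm ?_)
    simp only [Complex.reCLM_apply, smul_eq_mul]
    rw [← mul_assoc, Complex.conj_mul', ← Complex.ofReal_pow, Complex.re_ofReal_mul,
      Complex.normSq_eq_norm_sq]
  have hcont : ContinuousOn φ (Set.Icc 0 1) := fun t ht =>
    (hder t ht).continuousAt.continuousWithinAt
  have hmono : StrictMonoOn φ (Set.Icc 0 1) := by
    apply strictMonoOn_of_deriv_pos (convex_Icc 0 1) hcont
    intro t ht
    rw [interior_Icc] at ht
    rw [(hder t (Set.mem_Icc_of_Ioo ht)).deriv]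
    exact mul_pos (Complex.normSq_pos.mpr hwne) (hre _ (hmem t (Set.mem_Icc_of_Ioo ht)))
  have h01 : φ 0 < φ 1 := hmono (Set.left_mem_Icc.mpr zero_le_one)
    (Set.right_mem_Icc.mpr zero_le_one) zero_lt_one
  have e0 : φ 0 = ((starRingEnd ℂ w) * h x).re := by simp [hφ, hc]
  have e1 : φ 1 = ((starRingEnd ℂ w) * h y).re := by simp [hφ, hc, hw]
  rw [e0, e1, hxy] at h01
  exact lt_irrefl _ h01
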